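/- Let P be a reflexive polyhedron in M_ℝ and P⁺ ⊆ M_ℝ × ℝ the cone generated by {(m,1) : m ∈ P}. Then P⁺ is a strongly convex rational polyhedral cone, and its dual cone equals (P°)⁺, the cone generated by {(n,1) : n ∈ P°}, under the pairing ⟨(n,k),(m,l)⟩ = ⟨n,m⟩ + kl. -/

import Mathlib

open Finset

/-- The standard pairing between `ℝⁿ` and its dual (identified with `ℝⁿ`). -/
def pairR {n : ℕ} (x y : Fin n → ℝ) : ℝ := ∑ i, x i * y i

/-- A point of `M_ℝ = ℝⁿ` is integral if it lies in the lattice `M = ℤⁿ`. -/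
def IsIntegralPt {n : ℕ} (x : Fin n → ℝ) : Prop := ∀ i, ∃ z : ℤ, x i = (z : ℝ)

/-- The polar `P° = {x | ⟨x,y⟩ ≥ -1 for all y ∈ P}`. -/
def polarSet {n : ℕ} (P : Set (Fin n → ℝ)) : Set (Fin n → ℝ) :=
  {x | ∀ y ∈ P, -1 ≤ pairR x y}

/-- An integral (lattice) polytope: the convex hull of finitely many lattice points. -/
def IsLatticePolytope {n : ℕ} (P : Set (Fin n → ℝ)) : Prop :=
  ∃ S : Finset (Fin n → ℝ), (∀ x ∈ S, IsIntegralPt x) ∧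
    P = convexHull ℝ (S : Set (Fin n → ℝ))

/-- `{y | ⟨u,y⟩ = c}` is a supporting hyperplane of `P` cutting out a
codimension-one face. -/
def IsCodimOneSupport {n : ℕ} (P : Set (Fin n → ℝ)) (u : Fin n → ℝ) (c : ℝ) : Prop :=
  u ≠ 0 ∧ (∀ y ∈ P, c ≤ pairR u y) ∧
  Module.finrank ℝ (affineSpan ℝ {y ∈ P | pairR u y = c}).direction = n - 1

/-- A reflexive polytope: an integral polytope with `0` in its interior all of whose
codimension-one supporting hyperplanes have the form `{y | ⟨ℓ,y⟩ = -1}` with `ℓ`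
in the dual lattice. -/
def IsReflexive {n : ℕ} (P : Set (Fin n → ℝ)) : Prop :=
  IsLatticePolytope P ∧ (0 : Fin n → ℝ) ∈ interior P ∧
  ∀ u : Fin n → ℝ, ∀ c : ℝ, IsCodimOneSupport P u c →
    ∃ ℓ : Fin n → ℤ, {y : Fin n → ℝ | pairR u y = c} =
      {y : Fin n → ℝ | pairR (fun i => (ℓ i : ℝ)) y = -1}


/-- The pairing on `M⁺_ℝ = ℝⁿ × ℝ`, `⟨(n,k),(m,l)⟩ = ⟨n,m⟩ + k·l`. -/
def pairPlus {n : ℕ} (x y : (Fin n → ℝ) × ℝ) : ℝ := pairR x.1 y.1 + x.2 * y.2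

/-- The cone `Q⁺ ⊆ M_ℝ × ℝ` generated by `Q × {1}`. -/
def coneOver {n : ℕ} (Q : Set (Fin n → ℝ)) : Set ((Fin n → ℝ) × ℝ) :=
  {x | ∃ t : ℝ, 0 ≤ t ∧ ∃ m ∈ Q, x = t • ((m, 1) : (Fin n → ℝ) × ℝ)}

lemma pairR_smul_left {n : ℕ} (c : ℝ) (x y : Fin n → ℝ) :
    pairR (c • x) y = c * pairR x y := by
  simp [pairR, Finset.mul_sum, mul_assoc]

lemma pairR_smul_right {n : ℕ} (c : ℝ) (x y : Fin n → ℝ) :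
    pairR x (c • y) = c * pairR x y := by
  simp [pairR, Finset.mul_sum, mul_left_comm]

lemma pairR_zero_right {n : ℕ} (x : Fin n → ℝ) : pairR x 0 = 0 := by
  simp [pairR]

/-- For a reflexive polytope `P`, the cone `P⁺` over `P × {1}` is a
strongly convex rational polyhedral cone, and its dual cone equals `(P°)⁺` under the
pairing `⟨(n,k),(m,l)⟩ = ⟨n,m⟩ + kl`. -/
theorem cone_over_reflexive {n : ℕ} (P : Set (Fin n → ℝ)) (hP : IsReflexive P) :
    Convex ℝ (coneOver P) ∧
    {x | x ∈ coneOver P ∧ -x ∈ coneOver P} = {(0 : (Fin n → ℝ) × ℝ)} ∧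
    (∃ G : Finset ((Fin n → ℤ) × ℤ), coneOver P =
      {x | ∃ c : ((Fin n → ℤ) × ℤ) → ℝ, (∀ g, 0 ≤ c g) ∧
        x = ∑ g ∈ G, c g • (((fun i => ((g.1 i : ℝ))), (g.2 : ℝ)) : (Fin n → ℝ) × ℝ)}) ∧
    {x : (Fin n → ℝ) × ℝ | ∀ y ∈ coneOver P, 0 ≤ pairPlus x y} = coneOver (polarSet P)
    := by
  obtain ⟨⟨S, hSint, hSP⟩, h0, _⟩ := hP
  have hPconv : Convex ℝ P := hSP ▸ convex_convexHull ℝ _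
  have h0P : (0 : Fin n → ℝ) ∈ P := interior_subset h0
  refine ⟨?_, ?_, ?_, ?_⟩
  · -- convexity
    rintro x ⟨t, ht, m, hm, rfl⟩ y ⟨s, hs, m', hm', rfl⟩ a b ha hb hab
    by_cases hT : a * t + b * s = 0
    · refine ⟨0, le_refl _, m, hm, ?_⟩
      have h1 : a * t = 0 ∧ b * s = 0 := by
        constructor <;> nlinarith
      simp [smul_smul, h1.1, h1.2]
    · have hT' : 0 < a * t + b * s := lt_of_le_of_ne (by positivity) (Ne.symm hT)
      set T := a * t + b * s with hTdef
      refine ⟨T, le_of_lt hT', T⁻¹ • ((a*t) • m + (b*s) • m'), ?_, ?_⟩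
      · have heq : T⁻¹ • ((a*t) • m + (b*s) • m')
            = ((a*t)/T) • m + ((b*s)/T) • m' := by
          rw [smul_add, smul_smul, smul_smul, div_eq_inv_mul, div_eq_inv_mul]
        rw [heq]
        exact hPconv hm hm' (by positivity) (by positivity) (by field_simp; exact hTdef.symm)
      · apply Prod.ext
        · simp [smul_smul, smul_add, ← mul_assoc, mul_inv_cancel₀ hT]
        · simp [hTdef]
  · -- strong convexity
    ext x
    simp only [Set.mem_setOf_eq, Set.mem_singleton_iff]
    constructor
    · rintro ⟨⟨t, ht, m, hm, hx⟩, ⟨s, hs, m', hm', hx'⟩⟩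
      have h2 : x.2 = t := by rw [hx]; simp
      have h2' : -x.2 = s := by rw [← Prod.snd_neg, hx']; simp
      have ht0 : t = 0 := by linarith [h2 ▸ ht, h2' ▸ hs]
      rw [hx, ht0, zero_smul]
    · rintro rfl
      exact ⟨⟨0, le_refl _, 0, h0P, by simp⟩, ⟨0, le_refl _, 0, h0P, by simp⟩⟩
  · -- rational polyhedral
    classical
    set f : (Fin n → ℝ) → (Fin n → ℤ) :=
      fun x i => if h : ∃ z : ℤ, x i = (z : ℝ) then h.choose else 0 with hf
    have hfval : ∀ x ∈ S, ∀ i, ((f x i : ℤ) : ℝ) = x i := by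
      intro x hx i
      have h : ∃ z : ℤ, x i = (z : ℝ) := hSint x hx i
      simp only [hf, dif_pos h]
      exact h.choose_spec.symm
    set toG : (Fin n → ℝ) → ((Fin n → ℤ) × ℤ) := fun x => (f x, 1) with htoG
    have hinj : Set.InjOn toG S := by
      intro x hx y hy hxy
      funext i
      have : f x = f y := congrArg Prod.fst hxy
      rw [← hfval x hx i, ← hfval y hy i, this]
    refine ⟨S.image toG, ?_⟩
    ext x
    simp only [Set.mem_setOf_eq]
    constructor
    · rintro ⟨t, ht, m, hm, rfl⟩
      rw [hSP, Finset.mem_convexHull'] at hm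
      obtain ⟨w, hw0, hw1, hwm⟩ := hm
      refine ⟨fun g => ∑ s ∈ S.filter (fun s => toG s = g), t * w s, ?_, ?_⟩
      · intro g
        exact Finset.sum_nonneg fun s hs => mul_nonneg ht (hw0 s (Finset.mem_filter.mp hs).1)
      · rw [Finset.sum_image (fun a ha b hb => hinj ha hb)]
        have key : ∀ s ∈ S,
            (∑ s' ∈ S.filter (fun s' => toG s' = toG s), t * w s') •
              (((fun i => ((toG s).1 i : ℝ)), ((toG s).2 : ℝ)) : (Fin n → ℝ) × ℝ)
            = (t * w s) • ((s, 1) : (Fin n → ℝ) × ℝ) := by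
          intro s hs
          have hfe : S.filter (fun s' => toG s' = toG s) = {s} := by
            ext a
            simp only [Finset.mem_filter, Finset.mem_singleton]
            constructor
            · rintro ⟨ha, he⟩; exact hinj ha hs he
            · rintro rfl; exact ⟨hs, rfl⟩
          rw [hfe, Finset.sum_singleton]
          congr 1
          apply Prod.ext
          · funext i; exact hfval s hs i
          · simp [htoG]
        rw [Finset.sum_congr rfl key]
        apply Prod.ext
        · simp only [Prod.fst_sum, Prod.smul_mk, Prod.smul_fst]
          rw [← hwm]
          rw [Finset.smul_sum]
          exact Finset.sum_congr rfl fun s hs => by rw [smul_smul]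
        · simp only [Prod.snd_sum, Prod.smul_mk, Prod.smul_snd]
          simp only [smul_eq_mul, mul_one, ← Finset.mul_sum, hw1, Prod.smul_snd]
    · rintro ⟨c, hc0, rfl⟩
      rw [Finset.sum_image (fun a ha b hb => hinj ha hb)]
      have hFs : ∀ s ∈ S, c (toG s) • (((fun i => (((toG s).1 i : ℝ))), ((toG s).2 : ℝ)) :
          (Fin n → ℝ) × ℝ) = c (toG s) • ((s, 1) : (Fin n → ℝ) × ℝ) := by
        intro s hs
        congr 1
        apply Prod.ext
        · funext i; exact hfval s hs i
        · simp [htoG]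
      rw [Finset.sum_congr rfl hFs]
      by_cases hT : ∑ s ∈ S, c (toG s) = 0
      · have hz : ∀ s ∈ S, c (toG s) = 0 :=
          (Finset.sum_eq_zero_iff_of_nonneg (fun s _ => hc0 (toG s))).mp hT
        refine ⟨0, le_refl _, 0, h0P, ?_⟩
        rw [zero_smul]
        exact Finset.sum_eq_zero fun s hs => by rw [hz s hs, zero_smul]
      · have hT0 : 0 ≤ ∑ s ∈ S, c (toG s) :=
          Finset.sum_nonneg fun s _ => hc0 (toG s)
        refine ⟨∑ s ∈ S, c (toG s), hT0,
          (∑ s ∈ S, c (toG s))⁻¹ • ∑ s ∈ S, c (toG s) • s, ?_, ?_⟩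
        · rw [hSP, Finset.mem_convexHull']
          refine ⟨fun s => (∑ s ∈ S, c (toG s))⁻¹ * c (toG s),
            fun s hs => mul_nonneg (inv_nonneg.mpr hT0) (hc0 _), ?_, ?_⟩
          · rw [← Finset.mul_sum, inv_mul_cancel₀ hT]
          · rw [Finset.smul_sum]
            exact Finset.sum_congr rfl fun s hs => by rw [smul_smul]
        · apply Prod.ext
          · simp only [Prod.fst_sum, Prod.smul_mk, Prod.smul_fst]
            rw [smul_inv_smul₀ hT]
          · simp only [Prod.snd_sum, Prod.smul_mk, Prod.smul_snd, smul_eq_mul, mul_one]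
  · -- dual cone
    ext x
    simp only [Set.mem_setOf_eq]
    constructor
    · intro hx
      have hmem : ∀ m ∈ P, 0 ≤ pairR x.1 m + x.2 := by
        intro m hm
        have := hx (m, 1) ⟨1, zero_le_one, m, hm, by simp⟩
        simpa [pairPlus] using this
      have hk : 0 ≤ x.2 := by
        have := hmem 0 h0P
        simpa [pairR_zero_right] using this
      rcases eq_or_lt_of_le hk with hk0 | hkpos
      · -- x.2 = 0 : show x.1 = 0
        have hup : ∀ m ∈ P, 0 ≤ pairR x.1 m := by
          intro m hm; have := hmem m hm; rw [← hk0] at this; linarith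
        have hu : x.1 = 0 := by
          obtain ⟨ε, hε, hball⟩ := Metric.mem_nhds_iff.mp (mem_interior_iff_mem_nhds.mp h0)
          set u := x.1 with hudef
          have hδ : (0:ℝ) < ε / (2 * (‖u‖ + 1)) := by positivity
          set δ := ε / (2 * (‖u‖ + 1)) with hδd
          have hmball : -(δ • u) ∈ Metric.ball (0 : Fin n → ℝ) ε := by
            rw [mem_ball_zero_iff, norm_neg, norm_smul, Real.norm_eq_abs,
              abs_of_pos hδ]
            calc δ * ‖u‖ < δ * (2 * (‖u‖ + 1)) := by
                  apply mul_lt_mul_of_pos_left _ hδ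
                  nlinarith [norm_nonneg u]
              _ = ε := by rw [hδd]; exact div_mul_cancel₀ _ (by positivity)
          have h1 : 0 ≤ pairR u (-(δ • u)) := hup _ (hball hmball)
          have h2 : pairR u (-(δ • u)) = -(δ * pairR u u) := by
            have : -(δ • u) = (-δ) • u := by rw [neg_smul]
            rw [this, pairR_smul_right]; ring
          have h3 : pairR u u ≤ 0 := by
            rw [h2] at h1; nlinarith
          have h4 : ∀ i ∈ Finset.univ, (0:ℝ) ≤ u i * u i :=
            fun i _ => mul_self_nonneg _
          have h5 : pairR u u = 0 := le_antisymm h3 (Finset.sum_nonneg h4)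
          funext i
          have := (Finset.sum_eq_zero_iff_of_nonneg h4).mp h5 i (Finset.mem_univ i)
          exact mul_self_eq_zero.mp this
        refine ⟨0, le_refl _, 0, ?_, ?_⟩
        · intro y hy; simp [pairR]
        · rw [zero_smul]; apply Prod.ext <;> simp [hu, ← hk0]
      · refine ⟨x.2, le_of_lt hkpos, x.2⁻¹ • x.1, ?_, ?_⟩
        · intro y hy
          rw [pairR_smul_left]
          calc (-1 : ℝ) = x.2⁻¹ * (-x.2) := by field_simp
            _ ≤ x.2⁻¹ * pairR x.1 y := by
                apply mul_le_mul_of_nonneg_left _ (le_of_lt (inv_pos.mpr hkpos))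
                linarith [hmem y hy]
        · apply Prod.ext
          · simp [smul_inv_smul₀ (ne_of_gt hkpos)]
          · simp
    · rintro ⟨t, ht, u, hu, rfl⟩ y ⟨s, hs, m, hm, rfl⟩
      have hum := hu m hm
      simp only [pairPlus, Prod.smul_mk, Prod.smul_fst, Prod.smul_snd, smul_eq_mul, mul_one]
      rw [pairR_smul_left, pairR_smul_right]
      nlinarith [mul_nonneg ht hs,
        mul_nonneg (mul_nonneg ht hs) (show (0:ℝ) ≤ pairR u m + 1 by linarith)]
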